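/- For a metric space (X,d), the completion of (X,d) is Bourbaki-complete if and only if every Bourbaki-bounded subset of X is totally bounded. -/

import Mathlib

open Metric Filter Set

/-- Iterated chain-ball: `chainBall x eps m` is the set of points joinable to `x`
by a chain of `m + 1` steps each of length `< eps`; `chainBall x eps 0` is the open
ball (corresponding to `B^1`), and `chainBall x eps m` corresponds to `B^(m+1)`. -/
def chainBall {X : Type*} [PseudoMetricSpace X] (x : X) (eps : Real) : Nat -> Set X
  | 0 => Metric.ball x eps
  | m + 1 => Set.iUnion fun y : X => Set.iUnion fun _ : y ∈ chainBall x eps m => Metric.ball y eps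

/-- `B` is Bourbaki-bounded in `X`. -/
def IsBourbakiBounded {X : Type*} [PseudoMetricSpace X] (B : Set X) : Prop :=
  ∀ ε > (0 : ℝ), ∃ m : ℕ, ∃ s : Finset X, B ⊆ ⋃ x ∈ s, chainBall x ε m

/-- A sequence is Bourbaki-Cauchy in `X`. -/
def BourbakiCauchySeq {X : Type*} [PseudoMetricSpace X] (u : ℕ → X) : Prop :=
  ∀ ε > (0 : ℝ), ∃ m n₀ : ℕ, ∃ p : X, ∀ n ≥ n₀, u n ∈ chainBall p ε m

/-- A metric space is (sequentially) Bourbaki-complete if every Bourbaki-Cauchy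
sequence has a cluster point. -/
def IsBourbakiComplete (X : Type*) [PseudoMetricSpace X] : Prop :=
  ∀ u : ℕ → X, BourbakiCauchySeq u → ∃ x : X, MapClusterPt x atTop u

/-- Chain characterization of membership in a chain-ball. -/
lemma mem_chainBall_iff {Y : Type*} [PseudoMetricSpace Y] {x y : Y} {ε : ℝ} {m : ℕ} :
    y ∈ chainBall x ε m ↔
      ∃ c : ℕ → Y, c 0 = x ∧ c (m + 1) = y ∧ ∀ i ≤ m, dist (c (i + 1)) (c i) < ε := by
  induction m generalizing y with
  | zero =>
    simp only [chainBall, mem_ball]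
    constructor
    · intro h
      refine ⟨fun i => if i = 0 then x else y, by simp, by simp, ?_⟩
      intro i hi
      interval_cases i
      simpa using h
    · rintro ⟨c, h0, h1, hs⟩
      have := hs 0 le_rfl
      rwa [h0, h1] at this
  | succ m ih =>
    constructor
    · intro h
      simp only [chainBall, mem_iUnion] at h
      obtain ⟨y', hy', hball⟩ := h
      obtain ⟨c, h0, h1, hs⟩ := ih.1 hy'
      refine ⟨fun i => if i = m + 2 then y else c i, by simp [h0], by simp, ?_⟩
      intro i hi
      rcases Nat.lt_or_ge i (m + 1) with h' | h'
      · simp only [if_neg (by omega : ¬ i + 1 = m + 2), if_neg (by omega : ¬ i = m + 2)]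
        exact hs i (by omega)
      · have hi' : i = m + 1 := by omega
        subst hi'
        simp only [if_pos rfl, if_neg (by omega : ¬ m + 1 = m + 2), h1]
        exact mem_ball.mp hball
    · rintro ⟨c, h0, h1, hs⟩
      simp only [chainBall, mem_iUnion]
      refine ⟨c (m + 1), ih.2 ⟨c, h0, rfl, fun i hi => hs i (by omega)⟩, ?_⟩
      rw [mem_ball, ← h1]
      exact hs (m + 1) le_rfl

lemma chainBall_mono {Y : Type*} [PseudoMetricSpace Y] {x : Y} {ε ε' : ℝ} {m m' : ℕ}
    (hε : 0 < ε') (hee : ε ≤ ε') (hm : m ≤ m') : chainBall x ε m ⊆ chainBall x ε' m' := by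
  intro y hy
  obtain ⟨c, h0, h1, hs⟩ := mem_chainBall_iff.mp hy
  refine mem_chainBall_iff.mpr ⟨fun i => c (min i (m + 1)), by simpa using h0, by
    simp only [min_eq_right (by omega : m + 1 ≤ m' + 1)]; exact h1, ?_⟩
  intro i hi
  rcases le_or_gt (i + 1) (m + 1) with h | h
  · have e1 : min (i + 1) (m + 1) = i + 1 := min_eq_left h
    have e2 : min i (m + 1) = i := min_eq_left (by omega)
    simp only [e1, e2]
    exact lt_of_lt_of_le (hs i (by omega)) hee
  · have e1 : min (i + 1) (m + 1) = m + 1 := min_eq_right (by omega)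
    have e2 : min i (m + 1) = m + 1 := min_eq_right (by omega)
    simp only [e1, e2, dist_self]
    exact hε

lemma self_mem_chainBall {Y : Type*} [PseudoMetricSpace Y] {x : Y} {ε : ℝ} (hε : 0 < ε)
    (m : ℕ) : x ∈ chainBall x ε m :=
  mem_chainBall_iff.mpr ⟨fun _ => x, rfl, rfl, fun _ _ => by simpa using hε⟩

lemma coe_mem_chainBall {X : Type*} [MetricSpace X] {x y : X} {ε : ℝ} {m : ℕ}
    (h : y ∈ chainBall x ε m) :
    (y : UniformSpace.Completion X) ∈ chainBall (x : UniformSpace.Completion X) ε m := by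
  obtain ⟨c, h0, h1, hs⟩ := mem_chainBall_iff.mp h
  refine mem_chainBall_iff.mpr ⟨fun i => ↑(c i), by simp only [h0], by simp only [h1], fun i hi => ?_⟩
  rw [UniformSpace.Completion.dist_eq]
  exact hs i hi

/-- Transfer a chain in the completion ending at a point of `X` to a chain in `X`. -/
lemma chainBall_transfer {X : Type*} [MetricSpace X] {p : UniformSpace.Completion X}
    {p' v : X} {ε δ : ℝ} {m : ℕ} (hδ : 0 < δ) (hε : 0 ≤ ε)
    (hp : dist (↑p' : UniformSpace.Completion X) p < δ)
    (h : (↑v : UniformSpace.Completion X) ∈ chainBall p ε m) :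
    v ∈ chainBall p' (ε + 2 * δ) (m + 1) := by
  obtain ⟨c, h0, h1, hs⟩ := mem_chainBall_iff.mp h
  have hg : ∀ q : UniformSpace.Completion X, ∃ a : X, dist (↑a) q < δ := by
    intro q
    obtain ⟨a, ha⟩ := UniformSpace.Completion.denseRange_coe.exists_dist_lt q hδ
    exact ⟨a, by rwa [dist_comm]⟩
  choose g hgd using hg
  set d : ℕ → X := fun i => if i = 0 then p' else if i = m + 2 then v else g (c i) with hd
  have happrox : ∀ j ≤ m + 1, dist (↑(d j) : UniformSpace.Completion X) (c j) < δ := by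
    intro j hj
    rcases eq_or_ne j 0 with rfl | hj0
    · simp only [hd, if_pos rfl, h0]
      exact hp
    · simp only [hd, if_neg hj0, if_neg (by omega : j ≠ m + 2)]
      exact hgd (c j)
  refine mem_chainBall_iff.mpr ⟨d, by simp [hd], by simp [hd], ?_⟩
  intro i hi
  rcases Nat.lt_or_ge i (m + 1) with h' | h'
  · have key : dist (↑(d (i + 1)) : UniformSpace.Completion X) ↑(d i) ≤
        dist (↑(d (i + 1)) : UniformSpace.Completion X) (c (i + 1)) +
          dist (c (i + 1)) (c i) + dist (c i) (↑(d i)) := dist_triangle4 _ _ _ _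
    rw [UniformSpace.Completion.dist_eq] at key
    have a1 := happrox (i + 1) (by omega)
    have a2 := happrox i (by omega)
    rw [dist_comm] at a2
    have a3 := hs i (by omega)
    linarith
  · have hi' : i = m + 1 := by omega
    subst hi'
    have e1 : d (m + 2) = v := by simp [hd]
    have e2 : d (m + 1) = g (c (m + 1)) := by
      simp only [hd, if_neg (by omega : m + 1 ≠ 0), if_neg (by omega : m + 1 ≠ m + 2)]
    rw [e1, e2]
    have : dist v (g (c (m + 1))) =
        dist (↑v : UniformSpace.Completion X) ↑(g (c (m + 1))) :=
      (UniformSpace.Completion.dist_eq _ _).symm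
    rw [this, ← h1]
    have := hgd (c (m + 1))
    rw [dist_comm] at this
    linarith

/-- A set that is not totally bounded contains a uniformly separated sequence. -/
lemma exists_separated_seq {X : Type*} [MetricSpace X] {B : Set X} (h : ¬TotallyBounded B) :
    ∃ ε > (0 : ℝ), ∃ u : ℕ → X, (∀ n, u n ∈ B) ∧ ∀ i j, i ≠ j → ε ≤ dist (u i) (u j) := by
  classical
  rw [Metric.totallyBounded_iff] at h
  push_neg at h
  obtain ⟨ε, hε, hB⟩ := h
  have key : ∀ t : Finset X, ∃ x ∈ B, ∀ y ∈ t, ε ≤ dist x y := by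
    intro t
    have := hB t t.finite_toSet
    rw [not_subset] at this
    obtain ⟨x, hxB, hx⟩ := this
    refine ⟨x, hxB, fun y hy => ?_⟩
    by_contra hlt
    exact hx (mem_biUnion hy (by simpa [mem_ball] using not_le.mp hlt))
  choose f hfB hfd using key
  let F : ℕ → Finset X := fun n => Nat.rec ∅ (fun _ s => insert (f s) s) n
  have hF : ∀ n, F (n + 1) = insert (f (F n)) (F n) := fun n => rfl
  have hmono : Monotone F := monotone_nat_of_le_succ fun n => by
    rw [hF]; exact Finset.subset_insert _ _
  refine ⟨ε, hε, fun n => f (F n), fun n => hfB _, ?_⟩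
  have hlt : ∀ i j, i < j → ε ≤ dist (f (F j)) (f (F i)) := by
    intro i j hij
    apply hfd (F j) (f (F i))
    have : f (F i) ∈ F (i + 1) := by rw [hF]; exact Finset.mem_insert_self _ _
    exact hmono (by omega : i + 1 ≤ j) this
  intro i j hij
  rcases Nat.lt_or_ge i j with h' | h'
  · rw [dist_comm]; exact hlt i j h'
  · exact hlt j i (by omega)

/-- The completion of a metric space is Bourbaki-complete iff every Bourbaki-bounded
subset of the space is totally bounded. -/
theorem completion_bourbakiComplete_iff_tb (X : Type*) [MetricSpace X] :
    IsBourbakiComplete (UniformSpace.Completion X) ↔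
      ∀ B : Set X, IsBourbakiBounded B → TotallyBounded B := by
  constructor
  · -- forward direction
    intro hBC B hBB
    by_contra hTB
    obtain ⟨ε, hε, u, huB, husep⟩ := exists_separated_seq hTB
    set U : Ultrafilter ℕ := Ultrafilter.of atTop with hU
    have hUle : (U : Filter ℕ) ≤ atTop := Ultrafilter.of_le _
    have key : ∀ k : ℕ, ∃ m : ℕ, ∃ p : X,
        {n | u n ∈ chainBall p ((k : ℝ) + 1)⁻¹ m} ∈ (U : Filter ℕ) := by
      intro k
      obtain ⟨m, s, hs⟩ := hBB ((k : ℝ) + 1)⁻¹ (by positivity)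
      have hmem : (⋃ x ∈ (↑s : Set X), {n | u n ∈ chainBall x ((k : ℝ) + 1)⁻¹ m}) ∈
          (U : Filter ℕ) := by
        apply Filter.mem_of_superset Filter.univ_mem
        intro n _
        have hn := hs (huB n)
        simp only [mem_iUnion, Finset.mem_coe, mem_setOf_eq] at hn ⊢
        exact hn
      obtain ⟨p, _, hpU⟩ := (Ultrafilter.finite_biUnion_mem_iff s.finite_toSet).mp hmem
      exact ⟨m, p, hpU⟩
    choose mk pk hk using key
    set S : ℕ → Set ℕ := fun k => {n | u n ∈ chainBall (pk k) ((k : ℝ) + 1)⁻¹ (mk k)} with hSdef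
    set T : ℕ → Set ℕ := fun k => ⋂ i ∈ Set.Iic k, S i with hTdef
    have hTU : ∀ k, T k ∈ (U : Filter ℕ) :=
      fun k => (Filter.biInter_mem (Set.finite_Iic k)).mpr fun i _ => hk i
    have hTS : ∀ k n, k ≤ n → T n ⊆ S k := by
      intro k n hkn x hx
      exact Set.mem_iInter₂.mp hx k hkn
    have hT : ∀ k N : ℕ, ∃ n, n ∈ T k ∧ N ≤ n := by
      intro k N
      have h2 : {n : ℕ | N ≤ n} ∈ (U : Filter ℕ) := hUle (Filter.mem_atTop N)
      obtain ⟨n, hn⟩ := Filter.nonempty_of_mem (Filter.inter_mem (hTU k) h2)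
      exact ⟨n, hn.1, hn.2⟩
    choose nf hnf1 hnf2 using hT
    set φ : ℕ → ℕ := fun k => Nat.rec (nf 0 0) (fun k ih => nf (k + 1) (ih + 1)) k with hφdef
    have hφsucc : ∀ k, φ (k + 1) = nf (k + 1) (φ k + 1) := fun k => rfl
    have hφT : ∀ k, φ k ∈ T k := by
      intro k
      cases k with
      | zero => exact hnf1 0 0
      | succ k => rw [hφsucc]; exact hnf1 (k + 1) (φ k + 1)
    have hφmono : StrictMono φ := strictMono_nat_of_lt_succ fun n => by
      have := hnf2 (n + 1) (φ n + 1)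
      rw [hφsucc]
      omega
    set w : ℕ → UniformSpace.Completion X := fun n => ↑(u (φ n)) with hw
    have hwBC : BourbakiCauchySeq w := by
      intro ε' hε'
      obtain ⟨k, hkε⟩ := exists_nat_gt ε'⁻¹
      have hlt : ((k : ℝ) + 1)⁻¹ < ε' := by
        rw [inv_lt_comm₀ (by positivity) hε']
        calc ε'⁻¹ < (k : ℝ) := hkε
          _ < (k : ℝ) + 1 := by linarith
      refine ⟨mk k, k, ↑(pk k), fun n hn => ?_⟩
      have h1 : φ n ∈ S k := hTS k n hn (hφT n)
      have h2 : u (φ n) ∈ chainBall (pk k) ε' (mk k) :=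
        chainBall_mono hε' hlt.le le_rfl h1
      exact coe_mem_chainBall h2
    obtain ⟨ξ, hξ⟩ := hBC w hwBC
    have hfreq : ∃ᶠ n in atTop, w n ∈ ball ξ (ε / 2) :=
      mapClusterPt_iff_frequently.mp hξ (ball ξ (ε / 2)) (ball_mem_nhds ξ (by linarith))
    rw [Filter.frequently_atTop] at hfreq
    obtain ⟨n₁, _, hn₁⟩ := hfreq 0
    obtain ⟨n₂, hn₂ge, hn₂⟩ := hfreq (n₁ + 1)
    have hdist : dist (w n₁) (w n₂) < ε := by
      have d1 := mem_ball.mp hn₁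
      have d2 := mem_ball.mp hn₂
      have := dist_triangle (w n₁) ξ (w n₂)
      rw [dist_comm ξ (w n₂)] at this
      linarith
    rw [hw, UniformSpace.Completion.dist_eq] at hdist
    have hne : φ n₁ ≠ φ n₂ := fun h => by
      have := hφmono.injective h
      omega
    exact absurd hdist (not_lt.mpr (husep _ _ hne))
  · -- backward direction
    intro hTB u hu
    have hv : ∀ n : ℕ, ∃ a : X, dist (↑a) (u n) < ((n : ℝ) + 1)⁻¹ := by
      intro n
      obtain ⟨a, ha⟩ :=
        UniformSpace.Completion.denseRange_coe.exists_dist_lt (u n)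
          (by positivity : (0 : ℝ) < ((n : ℝ) + 1)⁻¹)
      exact ⟨a, by rwa [dist_comm]⟩
    choose v hvd using hv
    have hvBC : BourbakiCauchySeq v := by
      intro ε hε
      obtain ⟨m, n₀, p, hp⟩ := hu (ε / 4) (by linarith)
      obtain ⟨p', hp'⟩ : ∃ p' : X, dist (↑p' : UniformSpace.Completion X) p < ε / 4 := by
        obtain ⟨a, ha⟩ :=
          UniformSpace.Completion.denseRange_coe.exists_dist_lt p
            (by linarith : (0 : ℝ) < ε / 4)
        exact ⟨a, by rwa [dist_comm]⟩
      obtain ⟨k, hkε⟩ := exists_nat_gt (ε / 4)⁻¹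
      have hklt : ((k : ℝ) + 1)⁻¹ < ε / 4 := by
        rw [inv_lt_comm₀ (by positivity) (by linarith)]
        calc (ε / 4)⁻¹ < (k : ℝ) := hkε
          _ < (k : ℝ) + 1 := by linarith
      refine ⟨m + 2, max n₀ k, p', fun n hn => ?_⟩
      have hn0 : n₀ ≤ n := le_trans (le_max_left _ _) hn
      have hnk : k ≤ n := le_trans (le_max_right _ _) hn
      have hvn : (↑(v n) : UniformSpace.Completion X) ∈ chainBall p (ε / 4) (m + 1) := by
        simp only [chainBall, mem_iUnion]
        refine ⟨u n, hp n hn0, mem_ball.mpr ?_⟩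
        calc dist (↑(v n) : UniformSpace.Completion X) (u n) < ((n : ℝ) + 1)⁻¹ := hvd n
          _ ≤ ((k : ℝ) + 1)⁻¹ := by gcongr
          _ < ε / 4 := hklt
      have htr := chainBall_transfer (by linarith : (0 : ℝ) < ε / 4)
        (by linarith : (0 : ℝ) ≤ ε / 4) hp' hvn
      have : v n ∈ chainBall p' (ε / 4 + 2 * (ε / 4)) (m + 2) := htr
      exact chainBall_mono hε (by linarith) le_rfl this
    have hBB : IsBourbakiBounded (range v) := by
      classical
      intro ε hε
      obtain ⟨m, n₀, p, hp⟩ := hvBC ε hε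
      refine ⟨m, insert p ((Finset.range n₀).image v), ?_⟩
      rintro _ ⟨n, rfl⟩
      rcases Nat.lt_or_ge n n₀ with h | h
      · exact mem_biUnion
          (Finset.mem_insert_of_mem (Finset.mem_image.mpr ⟨n, Finset.mem_range.mpr h, rfl⟩))
          (self_mem_chainBall hε m)
      · exact mem_biUnion (Finset.mem_insert_self _ _) (hp n h)
    have hTBv := hTB (range v) hBB
    have hTBc : TotallyBounded
        ((fun a : X => (↑a : UniformSpace.Completion X)) '' range v) :=
      hTBv.image (UniformSpace.Completion.uniformContinuous_coe X)
    have hcomp : IsCompact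
        (closure ((fun a : X => (↑a : UniformSpace.Completion X)) '' range v)) :=
      TotallyBounded.isCompact_of_isClosed hTBc.closure isClosed_closure
    obtain ⟨ξ, _, ψ, hψ, hlim⟩ :=
      hcomp.tendsto_subseq (x := fun n => (↑(v n) : UniformSpace.Completion X))
        fun n => subset_closure (mem_image_of_mem _ (mem_range_self n))
    refine ⟨ξ, ?_⟩
    rw [mapClusterPt_iff_frequently]
    intro s hs
    obtain ⟨ε, hε, hball⟩ := Metric.mem_nhds_iff.mp hs
    rw [Filter.frequently_atTop]
    intro N
    obtain ⟨k₁, hk₁⟩ := exists_nat_gt (ε / 2)⁻¹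
    have hk₁lt : ((k₁ : ℝ) + 1)⁻¹ < ε / 2 := by
      rw [inv_lt_comm₀ (by positivity) (by linarith)]
      calc (ε / 2)⁻¹ < (k₁ : ℝ) := hk₁
        _ < (k₁ : ℝ) + 1 := by linarith
    obtain ⟨k₂, hk₂⟩ := (Metric.tendsto_atTop.mp hlim (ε / 2) (by linarith))
    set k := max N (max k₁ k₂) with hkdef
    have hNk : N ≤ k := le_max_left _ _
    have hk₂k : k₂ ≤ k := le_trans (le_max_right _ _) (le_max_right _ _)
    refine ⟨ψ k, le_trans hNk hψ.le_apply, ?_⟩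
    apply hball
    rw [mem_ball]
    have h1 : dist (↑(v (ψ k)) : UniformSpace.Completion X) ξ < ε / 2 := by
      have := hk₂ k hk₂k
      simpa using this
    have h2 : dist (u (ψ k)) (↑(v (ψ k)) : UniformSpace.Completion X) < ε / 2 := by
      have := hvd (ψ k)
      rw [dist_comm] at this
      calc dist (u (ψ k)) (↑(v (ψ k)) : UniformSpace.Completion X)
          < ((ψ k : ℝ) + 1)⁻¹ := this
        _ ≤ ((k₁ : ℝ) + 1)⁻¹ := by
            have hk₁k : k₁ ≤ ψ k := le_trans (le_trans (le_max_left _ _) (le_max_right _ _))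
              hψ.le_apply
            gcongr
        _ < ε / 2 := hk₁lt
    calc dist (u (ψ k)) ξ ≤ dist (u (ψ k)) (↑(v (ψ k)) : UniformSpace.Completion X) +
        dist (↑(v (ψ k)) : UniformSpace.Completion X) ξ := dist_triangle _ _ _
      _ < ε / 2 + ε / 2 := add_lt_add h2 h1
      _ = ε := by ring
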